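/- Let (K, ∂) be a strict Fr^n-differential field (K^∂ = K^p) and K ⊆ L an extension of Fr^n-differential fields. Suppose a ∈ L and m > 0 are such that ∂^m(a) is separably algebraic over K(a, ∂(a), …, ∂^{m-1}(a)). Then for every k > m, ∂^k(a) lies in the field K(a, ∂(a), …, ∂^m(a)). -/

import Mathlib

def IsFrDeriv {R : Type*} [CommRing R] (q : ℕ) (d : R → R) : Prop :=
  (∀ x y, d (x + y) = d x + d y) ∧ (∀ x y, d (x * y) = x ^ q * d y + y ^ q * d x)

section Helpers

variable {L : Type*} [Field L] {q : ℕ} {d : L → L} (hd : IsFrDeriv q d)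

include hd

lemma frd_zero : d 0 = 0 := by
  have := hd.1 0 0
  simp only [add_zero] at this
  linear_combination -this

lemma frd_one : d 1 = 0 := by
  have := hd.2 1 1
  simp only [one_pow, one_mul, mul_one] at this
  linear_combination -this

lemma frd_neg (x : L) : d (-x) = - d x := by
  have := hd.1 x (-x)
  rw [add_neg_cancel, frd_zero hd] at this
  linear_combination -this

lemma frd_pow (x : L) (k : ℕ) : d (x ^ k) = (k : L) * x ^ (q * (k - 1)) * d x := by
  induction k with
  | zero => simp [frd_one hd]
  | succ k ih =>
    rcases Nat.eq_zero_or_pos k with rfl | hk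
    · simp
    · rw [pow_succ, hd.2, ih]
      have h2 : (x ^ k) ^ q = x ^ (q * k) := by rw [← pow_mul, mul_comm]
      have hsum : q + q * (k - 1) = q * k := by
        cases k with
        | zero => omega
        | succ k' => simp only [Nat.succ_sub_one]; ring
      rw [h2,
        show x ^ q * ((k:L) * x ^ (q*(k-1)) * d x) = (k:L) * (x ^ q * x ^ (q*(k-1))) * d x by ring,
        ← pow_add, hsum]
      push_cast
      ring

lemma frd_inv (x : L) (hx : x ≠ 0) : d x⁻¹ = - (x⁻¹ ^ (2 * q)) * d x := by
  have h := hd.2 x x⁻¹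
  rw [mul_inv_cancel₀ hx, frd_one hd] at h
  have hxq : (x : L) ^ q ≠ 0 := pow_ne_zero _ hx
  have : d x⁻¹ = - ((x⁻¹) ^ q * d x) / x ^ q := by
    rw [eq_div_iff hxq]
    linear_combination -h
  rw [this, div_eq_mul_inv, ← inv_pow, show 2 * q = q + q from (two_mul q), pow_add]
  ring

end Helpers

lemma cast_pow_prime {L : Type*} [Field L] (p n k : ℕ) [Fact p.Prime] [CharP L p] :
    ((k : L)) ^ p ^ n = (k : L) := by
  rw [← iterate_frobenius]
  exact Function.iterate_fixed (map_natCast (frobenius L p) k) n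

lemma frd_eval {L : Type*} [Field L] {q : ℕ} {d : L → L} (hd : IsFrDeriv q d)
    (p n : ℕ) [Fact p.Prime] [CharP L p] (hq : q = p ^ n) (f : Polynomial L) (x : L) :
    d (f.eval x) =
      (f.derivative.eval x) ^ q * d x + f.sum (fun i c => d c * (x ^ q) ^ i) := by
  induction f using Polynomial.induction_on' with
  | add f g hf hg =>
      rw [Polynomial.eval_add, hd.1, hf, hg, Polynomial.derivative_add, Polynomial.eval_add,
        Polynomial.sum_add_index f g _ (fun i => by rw [frd_zero hd, zero_mul])
          (fun i b c => by rw [hd.1, add_mul])]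
      rw [hq, add_pow_char_pow]
      ring
  | monomial k a =>
      rw [Polynomial.eval_monomial, hd.2, frd_pow hd, Polynomial.derivative_monomial,
        Polynomial.eval_monomial,
        Polynomial.sum_monomial_index _ _ (by rw [frd_zero hd, zero_mul]),
        mul_pow, mul_pow, hq, cast_pow_prime, ← pow_mul, ← pow_mul, ← pow_mul,
        Nat.mul_comm (k - 1) (p ^ n), Nat.mul_comm k (p ^ n)]
      ring

lemma frd_adjoin {K L : Type*} [Field K] [Field L] [Algebra K L] {q : ℕ} {d : L → L}
    (hd : IsFrDeriv q d) (S : Set L) (E' : IntermediateField K L)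
    (hK : ∀ x : K, d (algebraMap K L x) ∈ E')
    (hS : ∀ x ∈ S, x ∈ E' ∧ d x ∈ E') :
    ∀ x ∈ IntermediateField.adjoin K S, x ∈ E' ∧ d x ∈ E' := by
  intro x hx
  induction hx using IntermediateField.adjoin_induction with
  | mem x hx => exact hS x hx
  | algebraMap x => exact ⟨E'.algebraMap_mem x, hK x⟩
  | add x y hx hy ihx ihy =>
      exact ⟨add_mem ihx.1 ihy.1, by rw [hd.1]; exact add_mem ihx.2 ihy.2⟩
  | inv x hx ihx =>
      rcases eq_or_ne x 0 with rfl | hx0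
      · simpa [frd_zero hd] using ihx
      · refine ⟨inv_mem ihx.1, ?_⟩
        rw [frd_inv hd x hx0]
        exact mul_mem (neg_mem (pow_mem (inv_mem ihx.1) _)) ihx.2
  | mul x y hx hy ihx ihy =>
      refine ⟨mul_mem ihx.1 ihy.1, ?_⟩
      rw [hd.2]
      exact add_mem (mul_mem (pow_mem ihx.1 q) ihy.2) (mul_mem (pow_mem ihy.1 q) ihx.2)


theorem stmt12 (p n : ℕ) [Fact p.Prime] (hn : 0 < n)
    {K L : Type*} [Field K] [Field L] [Algebra K L] [CharP K p] [CharP L p]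
    (dK : K → K) (dL : L → L)
    (hdK : IsFrDeriv (p ^ n) dK) (hdL : IsFrDeriv (p ^ n) dL)
    (hcompat : ∀ x : K, dL (algebraMap K L x) = algebraMap K L (dK x))
    (hstrict : ∀ x : K, dK x = 0 ↔ ∃ y : K, y ^ p = x)
    (a : L) (m : ℕ) (hm : 0 < m)
    (hsep : IsSeparable
      (IntermediateField.adjoin K (Set.range fun i : Fin m => dL^[(i : ℕ)] a))
      (dL^[m] a)) :
    ∀ k : ℕ, m < k →
      dL^[k] a ∈
        IntermediateField.adjoin K (Set.range fun i : Fin (m + 1) => dL^[(i : ℕ)] a) := by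
  set F := IntermediateField.adjoin K (Set.range fun i : Fin m => dL^[(i : ℕ)] a) with hFdef
  set E := IntermediateField.adjoin K (Set.range fun i : Fin (m + 1) => dL^[(i : ℕ)] a)
    with hEdef
  have hgenE : ∀ i ≤ m, dL^[i] a ∈ E := fun i hi =>
    IntermediateField.subset_adjoin K _ ⟨⟨i, Nat.lt_succ_of_le hi⟩, rfl⟩
  have hK : ∀ x : K, dL (algebraMap K L x) ∈ E := fun x => by
    rw [hcompat]; exact E.algebraMap_mem _
  have hF : ∀ x ∈ F, x ∈ E ∧ dL x ∈ E := by
    refine frd_adjoin hdL _ E hK ?_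
    rintro x ⟨i, rfl⟩
    refine ⟨hgenE i (le_of_lt i.2), ?_⟩
    rw [← Function.iterate_succ_apply' dL i a]
    exact hgenE (i + 1) i.2
  set b := dL^[m] a with hbdef
  have hbE : b ∈ E := hgenE m le_rfl
  set f := minpoly F b with hfdef
  set g := f.map (algebraMap F L) with hgdef
  have hg0 : g.eval b = 0 := by
    rw [hgdef, Polynomial.eval_map, ← Polynomial.aeval_def]; exact minpoly.aeval F b
  have hder : g.derivative.eval b ≠ 0 := by
    rw [hgdef, Polynomial.derivative_map, Polynomial.eval_map, ← Polynomial.aeval_def]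
    exact hsep.aeval_derivative_ne_zero (minpoly.aeval F b)
  have hgcoeff : ∀ j, g.coeff j ∈ F := fun j => by
    rw [hgdef, Polynomial.coeff_map]
    exact SetLike.coe_mem (f.coeff j)
  have heval : ∀ h : Polynomial L, (∀ i, h.coeff i ∈ E) → ∀ x ∈ E, h.eval x ∈ E := by
    intro h hh x hx
    rw [Polynomial.eval_eq_sum, Polynomial.sum_def]
    exact sum_mem fun i _ => mul_mem (hh i) (pow_mem hx i)
  have hid := frd_eval hdL p n rfl g b
  rw [hg0, frd_zero hdL] at hid
  have hsum : g.sum (fun i c => dL c * (b ^ (p ^ n)) ^ i) ∈ E := by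
    rw [Polynomial.sum_def]
    exact sum_mem fun i _ => mul_mem ((hF _ (hgcoeff i)).2) (pow_mem (pow_mem hbE _) _)
  have hdenE : (g.derivative.eval b) ^ (p ^ n) ∈ E := by
    refine pow_mem (heval _ (fun i => ?_) b hbE) _
    rw [Polynomial.coeff_derivative]
    exact mul_mem (hF _ (hgcoeff (i + 1))).1 (add_mem (natCast_mem E i) (one_mem E))
  have hDq : (g.derivative.eval b) ^ (p ^ n) ≠ 0 := pow_ne_zero _ hder
  have hdb : dL b ∈ E := by
    have h1 : dL b = - g.sum (fun i c => dL c * (b ^ (p ^ n)) ^ i) /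
        (g.derivative.eval b) ^ (p ^ n) := by
      rw [eq_div_iff hDq]
      linear_combination -hid
    rw [h1]
    exact div_mem (neg_mem hsum) hdenE
  have hkey : dL^[m + 1] a ∈ E := by
    rw [Function.iterate_succ_apply']
    exact hdb
  have hE : ∀ x ∈ E, dL x ∈ E := by
    intro x hx
    refine (frd_adjoin hdL _ E hK ?_ x hx).2
    rintro y ⟨i, rfl⟩
    refine ⟨hgenE i (Nat.lt_succ_iff.1 i.2), ?_⟩
    rw [← Function.iterate_succ_apply' dL i a]
    rcases Nat.lt_or_ge (i : ℕ) m with hi | hi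
    · exact hgenE (i + 1) hi
    · have : (i : ℕ) = m := le_antisymm (Nat.lt_succ_iff.1 i.2) hi
      rw [this]
      exact hkey
  have hall : ∀ k, dL^[k] a ∈ E := by
    intro k
    induction k with
    | zero => exact hgenE 0 (Nat.zero_le m)
    | succ k ih => rw [Function.iterate_succ_apply']; exact hE _ ih
  exact fun k _ => hall k
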